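/- Let p ≥ 2 be a prime, r ≥ 1, and write a ≥ 1 uniquely as a = ∑_{i=0}^{r-1} a_i p^i with 0 ≤ a_j < p for 0 ≤ j ≤ r-2 and a_{r-1} ≥ 0. Let λ be a partition of a all of whose parts are of the form p^h with 0 ≤ h < r. Then for every 0 ≤ k < r, the inequality ∑_{h=k}^{r-1} a_h p^{h-k} ≥ ∑_{h=k}^{r-1} m_{p^h}(λ) p^{h-k} holds. -/

import Mathlib

/-- The base-`p` "digits" of `a` truncated at position `r-1`: `a_i = (a / p^i) % p` for
`i < r - 1`, while the top coefficient `a_{r-1} = a / p^{r-1}` is unbounded. -/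
def topDigit (p r a i : ℕ) : ℕ :=
  if i = r - 1 then a / p ^ (r - 1) else a / p ^ i % p

lemma topDigit_sum (p r a : ℕ) :
    ∀ n k, r - k = n + 1 → ∑ h ∈ Finset.Ico k r, topDigit p r a h * p ^ (h - k) = a / p ^ k := by
  intro n
  induction n with
  | zero =>
    intro k hk
    have hkr : r = k + 1 := by omega
    subst hkr
    simp [topDigit, Finset.sum_Ico_eq_sum_range]
  | succ n ih =>
    intro k hk
    have hkr : k < r := by omega
    rw [Finset.sum_eq_sum_Ico_succ_bot hkr]
    have h1 : ∑ h ∈ Finset.Ico (k + 1) r, topDigit p r a h * p ^ (h - k)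
        = (∑ h ∈ Finset.Ico (k + 1) r, topDigit p r a h * p ^ (h - (k + 1))) * p := by
      rw [Finset.sum_mul]
      refine Finset.sum_congr rfl fun h hh => ?_
      rw [Finset.mem_Ico] at hh
      have : h - k = (h - (k + 1)) + 1 := by omega
      rw [this, pow_succ, mul_assoc]
    rw [h1, ih (k + 1) (by omega)]
    have hne : k ≠ r - 1 := by omega
    simp only [topDigit, if_neg hne]
    have : a / p ^ (k + 1) = a / p ^ k / p := by
      rw [pow_succ, Nat.div_div_eq_div_mul]
    rw [this, Nat.sub_self, pow_zero, mul_one]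
    exact Nat.mod_add_div' (a / p ^ k) p

theorem stmt9 (p r a : ℕ) (hp : p.Prime) (hr : 1 ≤ r) (ha : 1 ≤ a)
    (P : Nat.Partition a) (hparts : ∀ x ∈ P.parts, ∃ h < r, x = p ^ h) :
    ∀ k < r,
      ∑ h ∈ Finset.Ico k r, P.parts.count (p ^ h) * p ^ (h - k) ≤
        ∑ h ∈ Finset.Ico k r, topDigit p r a h * p ^ (h - k) := by
  intro k hk
  have hrhs := topDigit_sum p r a (r - k - 1) k (by omega)
  rw [hrhs]
  have hpinj : Function.Injective (fun h : ℕ => p ^ h) := Nat.pow_right_injective hp.two_le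
  -- the total count sum equals a
  have htot : ∑ h ∈ Finset.Ico 0 r, P.parts.count (p ^ h) * p ^ h = a := by
    have h1 : ∑ x ∈ P.parts.toFinset, P.parts.count x * x = a := by
      have h2 := congrArg Multiset.sum (Multiset.toFinset_sum_count_nsmul_eq P.parts)
      rw [← Multiset.coe_sumAddMonoidHom, map_sum] at h2
      simpa [Multiset.coe_sumAddMonoidHom, Multiset.nsmul_singleton, Multiset.sum_replicate, P.parts_sum, mul_comm] using h2
    have hsub : P.parts.toFinset ⊆ (Finset.Ico 0 r).image (fun h => p ^ h) := by
      intro x hx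
      rw [Multiset.mem_toFinset] at hx
      obtain ⟨h, hhr, rfl⟩ := hparts x hx
      exact Finset.mem_image.2 ⟨h, Finset.mem_Ico.2 ⟨Nat.zero_le _, hhr⟩, rfl⟩
    calc ∑ h ∈ Finset.Ico 0 r, P.parts.count (p ^ h) * p ^ h
        = ∑ x ∈ (Finset.Ico 0 r).image (fun h => p ^ h), P.parts.count x * x := by
          rw [Finset.sum_image (fun a _ b _ hab => hpinj hab)]
      _ = ∑ x ∈ P.parts.toFinset, P.parts.count x * x := by
          refine (Finset.sum_subset hsub fun x _ hx => ?_).symm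
          rw [Multiset.mem_toFinset] at hx
          simp [Multiset.count_eq_zero_of_notMem hx]
      _ = a := h1
  have hle : ∑ h ∈ Finset.Ico k r, P.parts.count (p ^ h) * p ^ h ≤ a := by
    exact le_of_le_of_eq
      (Finset.sum_le_sum_of_subset (Finset.Ico_subset_Ico (Nat.zero_le _) le_rfl)) htot
  have hmul : (∑ h ∈ Finset.Ico k r, P.parts.count (p ^ h) * p ^ (h - k)) * p ^ k
      = ∑ h ∈ Finset.Ico k r, P.parts.count (p ^ h) * p ^ h := by
    rw [Finset.sum_mul]
    refine Finset.sum_congr rfl fun h hh => ?_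
    rw [Finset.mem_Ico] at hh
    rw [mul_assoc, ← pow_add]
    congr 2
    omega
  rw [Nat.le_div_iff_mul_le (pow_pos hp.pos k), hmul]
  exact hle
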